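/- Let X be a set and S a finite subset of the free monoid ⟨X⟩. Then there exists an element w ∈ ⟨X⟩ such that the singleton {w} is inverse-equivalent to S. In particular, if S = {w₁, …, wₙ} with n > 1, one may take w = w₁⋯wₙ₋₁·wₙ·wₙ₋₁⋯w₁. -/

import Mathlib

namespace AdjoinInverses

variable {X : Type*}

/-- The embedding of the free monoid on `X` into the free monoid on `X ⊕ S`. -/
def emb (S : Set (FreeMonoid X)) : FreeMonoid X →* FreeMonoid (X ⊕ S) :=
  FreeMonoid.map Sum.inl

/-- The generator `i(w)` corresponding to `w ∈ S`. -/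
def igen (S : Set (FreeMonoid X)) (w : S) : FreeMonoid (X ⊕ S) :=
  FreeMonoid.of (Sum.inr w)

/-- The defining relations `w ⬝ i(w) = 1` and `i(w) ⬝ w = 1` for `w ∈ S`. -/
inductive InvRel (S : Set (FreeMonoid X)) : FreeMonoid (X ⊕ S) → FreeMonoid (X ⊕ S) → Prop
  | mul_inv (w : S) : InvRel S (emb S w.1 * igen S w) 1
  | inv_mul (w : S) : InvRel S (igen S w * emb S w.1) 1

/-- The congruence generated by the defining relations. -/
def invCon (S : Set (FreeMonoid X)) : Con (FreeMonoid (X ⊕ S)) := conGen (InvRel S)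

/-- The monoid `⟨X : i(S)⟩` obtained from the free monoid on `X` by universally
adjoining a two-sided inverse to each element of `S`. -/
def AdjInv (S : Set (FreeMonoid X)) : Type _ := (invCon S).Quotient

instance (S : Set (FreeMonoid X)) : Monoid (AdjInv S) := Con.monoid _

/-- The natural homomorphism `⟨X⟩ → ⟨X : i(S)⟩`. -/
def natHom (S : Set (FreeMonoid X)) : FreeMonoid X →* AdjInv S :=
  ((invCon S).mk').comp (emb S)

/-- The adjoined inverse `i(w)`, as an element of `⟨X : i(S)⟩`. -/
def invElt (S : Set (FreeMonoid X)) (w : S) : AdjInv S :=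
  (invCon S).mk' (igen S w)

/-- `S` and `S'` are inverse-equivalent: each element of `S'` becomes invertible in
`⟨X : i(S)⟩` and each element of `S` becomes invertible in `⟨X : i(S')⟩`. -/
def InvEquiv (S S' : Set (FreeMonoid X)) : Prop :=
  (∀ w ∈ S', IsUnit (natHom S w)) ∧ ∀ w ∈ S, IsUnit (natHom S' w)

/-- Two (nonidentity) elements of the free monoid overlap: one can be written `a*b`
and the other `b*c` with `b ≠ 1` and at most one of `a`, `c` equal to `1`. -/
def Overlap (u v : FreeMonoid X) : Prop :=
  ∃ a b c : FreeMonoid X, b ≠ 1 ∧ (a ≠ 1 ∨ c ≠ 1) ∧ u = a * b ∧ v = b * c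

/-- A set `T` is overlap-free if no pair of elements of `T` (distinct or not) overlap. -/
def OverlapFree (T : Set (FreeMonoid X)) : Prop :=
  ∀ u ∈ T, ∀ v ∈ T, ¬ Overlap u v

lemma isUnit_of_left_right {M : Type*} [Monoid M] {a b c : M}
    (h1 : a * b = 1) (h2 : c * a = 1) : IsUnit a := by
  have hbc : b = c := by
    calc b = 1 * b := (one_mul b).symm
    _ = c * a * b := by rw [h2]
    _ = c * (a * b) := mul_assoc _ _ _
    _ = c := by rw [h1, mul_one]
  exact ⟨⟨a, b, h1, hbc ▸ h2⟩, rfl⟩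

lemma sandwich {M : Type*} [Monoid M] {a m : M} (h : IsUnit (a * m * a)) :
    IsUnit a ∧ IsUnit m := by
  obtain ⟨u, hu⟩ := h
  have h1 : a * (m * a * ↑u⁻¹) = 1 := by
    rw [← mul_assoc, ← mul_assoc, ← hu]; exact u.mul_inv
  have h2 : (↑u⁻¹ * (a * m)) * a = 1 := by
    rw [mul_assoc, mul_assoc, ← mul_assoc a m a, ← hu]; exact u.inv_mul
  have ha : IsUnit a := isUnit_of_left_right h1 h2
  refine ⟨ha, ?_⟩
  have hm : m = ↑ha.unit⁻¹ * ↑u * ↑ha.unit⁻¹ := by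
    rw [hu]
    calc m = ↑ha.unit⁻¹ * (↑ha.unit * m) := (ha.unit.inv_mul_cancel_left m).symm
    _ = ↑ha.unit⁻¹ * (↑ha.unit * m * ↑ha.unit * ↑ha.unit⁻¹) := by
        rw [ha.unit.mul_inv_cancel_right]
    _ = ↑ha.unit⁻¹ * (a * m * a) * ↑ha.unit⁻¹ := by
        rw [ha.unit_spec]; simp only [mul_assoc]
  rw [hm]
  exact ((ha.unit⁻¹.isUnit.mul u.isUnit).mul ha.unit⁻¹.isUnit)

def W {M : Type*} [Monoid M] (l : List M) : M :=
  l.dropLast.prod * l.getLastD 1 * l.dropLast.reverse.prod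

lemma W_nil {M : Type*} [Monoid M] : W ([] : List M) = 1 := by simp [W]

lemma W_single {M : Type*} [Monoid M] (x : M) : W [x] = x := by simp [W]

lemma W_cons {M : Type*} [Monoid M] (x y : M) (l : List M) :
    W (x :: y :: l) = x * W (y :: l) * x := by
  simp [W, List.dropLast_cons₂, List.getLastD_cons, mul_assoc]

lemma W_isUnit_iff {M : Type*} [Monoid M] (l : List M) :
    IsUnit (W l) ↔ ∀ x ∈ l, IsUnit x := by
  induction l with
  | nil => simp [W_nil]
  | cons x l ih =>
    cases l with
    | nil => simp [W_single]
    | cons y l =>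
      rw [W_cons]
      constructor
      · intro h
        obtain ⟨hx, hW⟩ := sandwich h
        intro z hz
        rcases List.mem_cons.mp hz with rfl | hz
        · exact hx
        · exact ih.mp hW z hz
      · intro h
        have hx : IsUnit x := h x List.mem_cons_self
        have hW : IsUnit (W (y :: l)) := ih.mpr (fun z hz => h z (List.mem_cons_of_mem _ hz))
        exact (hx.mul hW).mul hx

lemma getLastD_map {M N : Type*} (f : M → N) (l : List M) (x : M) :
    f (l.getLastD x) = (l.map f).getLastD (f x) := by
  induction l generalizing x with
  | nil => rfl
  | cons y l ih => simp only [List.getLastD_cons, List.map_cons, ih]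

lemma map_W {M N : Type*} [Monoid M] [Monoid N] (f : M →* N) (l : List M) :
    f (W l) = W (l.map f) := by
  have hlast : f (l.getLastD 1) = (l.map f).getLastD 1 := by
    rw [getLastD_map f l 1, map_one]
  simp only [W, map_mul, map_list_prod, List.map_dropLast, List.map_reverse, hlast]

lemma natHom_isUnit_mem (S : Set (FreeMonoid X)) {u : FreeMonoid X} (hu : u ∈ S) :
    IsUnit (natHom S u) := by
  have h1 : (invCon S) (emb S u * igen S ⟨u, hu⟩) 1 :=
    ConGen.Rel.of _ _ (InvRel.mul_inv ⟨u, hu⟩)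
  have h2 : (invCon S) (igen S ⟨u, hu⟩ * emb S u) 1 :=
    ConGen.Rel.of _ _ (InvRel.inv_mul ⟨u, hu⟩)
  have e1 : natHom S u * invElt S ⟨u, hu⟩ = 1 := by
    have h := (Con.eq (invCon S)).mpr h1
    exact h
  have e2 : invElt S ⟨u, hu⟩ * natHom S u = 1 := by
    have h := (Con.eq (invCon S)).mpr h2
    exact h
  exact isUnit_of_left_right e1 e2

lemma invEquiv_W (l : List (FreeMonoid X)) :
    InvEquiv {W l} {x | x ∈ l} := by
  constructor
  · intro v hv
    have hw : IsUnit (natHom {W l} (W l)) := natHom_isUnit_mem _ rfl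
    rw [map_W] at hw
    exact (W_isUnit_iff _).mp hw _ (List.mem_map_of_mem hv)
  · intro v hv
    rcases hv with rfl
    rw [map_W]
    refine (W_isUnit_iff _).mpr (fun z hz => ?_)
    obtain ⟨x, hx, rfl⟩ := List.mem_map.mp hz
    exact natHom_isUnit_mem _ hx

theorem stmt14 (X : Type*) (S : Set (FreeMonoid X)) (hS : S.Finite) :
    (∃ w : FreeMonoid X, InvEquiv {w} S) ∧
    ∀ l : List (FreeMonoid X), 1 < l.length → S = {x | x ∈ l} →
      InvEquiv {l.dropLast.prod * l.getLastD 1 * l.dropLast.reverse.prod} S := by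
  constructor
  · obtain ⟨l, hl⟩ : ∃ l : List (FreeMonoid X), S = {x | x ∈ l} := by
      refine ⟨hS.toFinset.toList, ?_⟩
      ext x; simp [Set.Finite.mem_toFinset]
    subst hl
    exact ⟨W l, invEquiv_W l⟩
  · intro l _ hSl
    have hw : l.dropLast.prod * l.getLastD 1 * l.dropLast.reverse.prod = W l := rfl
    rw [hw, hSl]
    exact invEquiv_W l

end AdjoinInverses
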